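/- For any set function f : 2^V → ℝ≥0, any point (p_1,…,p_K) ∈ ∏_{k=1}^K Δ_{n_k}, any k ∈ {1,…,K} and any m_1, m_2 ∈ {1,…,n_k}: if B_k = 1 then ∂²F/∂p_k^{m_1}∂p_k^{m_2} (p_1,…,p_K) = 0; and if B_k ≥ 2 then ∂²F/∂p_k^{m_1}∂p_k^{m_2} (p_1,…,p_K) = (B_k² − B_k) · E[ f(v_k^{m_1} | S ∪ {v_k^{m_2}}) − f(v_k^{m_1} | S) ], where S = ∪_{(k̂,b̂) ∉ {(k,1),(k,2)}} {e_{k̂}^{b̂}}, the union ranges over all pairs (k̂,b̂) with k̂ ∈ {1,…,K}, b̂ ∈ {1,…,B_{k̂}} except (k,1) and (k,2), and the random elements e_{k̂}^{b̂} are mutually independent with e_{k̂}^{b̂} ∼ Multi(p_{k̂}). -/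

import Mathlib

open Finset

noncomputable section

namespace Multinoulli

variable {K : ℕ}

/-- An element of the ground set `V`: a community index `k` together with the
index `m` of the element `v_k^m` inside its community `V_k`. -/
abbrev Elem (n : Fin K → ℕ) := Σ k : Fin K, Fin (n k)

/-- A sampling slot: a community `k` together with a trial index `b ∈ {1,…,B_k}`. -/
abbrev Slot (B : Fin K → ℕ) := Σ k : Fin K, Fin (B k)

/-- A joint outcome of all the independent multinoulli trials; `none` encodes a
draw of `∅`, which contributes no element. -/
abbrev Choice (n B : Fin K → ℕ) := ∀ s : Slot B, Option (Fin (n s.1))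

/-- The probability that `Multi(p_k)` (the `k`-th block of `x`) assigns to a given
outcome: `x ⟨k,m⟩` for the element `v_k^m` and `1 - Σ_m x ⟨k,m⟩` for `∅`. -/
def prob (n : Fin K → ℕ) (x : Elem n → ℝ) (k : Fin K) : Option (Fin (n k)) → ℝ
  | some m => x ⟨k, m⟩
  | none => 1 - ∑ m : Fin (n k), x ⟨k, m⟩

/-- The probability of the joint outcome `e` (all trials are mutually independent). -/
def jointProb (n B : Fin K → ℕ) (x : Elem n → ℝ) (e : Choice n B) : ℝ :=
  ∏ s : Slot B, prob n x s.1 (e s)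

/-- The subset of the ground set selected by the trials whose slot lies in `A`
(a draw of `∅` contributes no element to the union). -/
def chosen (n B : Fin K → ℕ) (e : Choice n B) (A : Finset (Slot B)) : Finset (Elem n) :=
  A.biUnion fun s => ((e s).map fun m => (⟨s.1, m⟩ : Elem n)).toFinset

/-- The Multinoulli Extension `F` of the set function `f`:
`F(x) = E[f(∪_{k,b} {e_k^b})]` for mutually independent `e_k^b ∼ Multi(p_k)`. -/
def ME (n B : Fin K → ℕ) (f : Finset (Elem n) → ℝ) (x : Elem n → ℝ) : ℝ :=
  ∑ e : Choice n B, f (chosen n B e Finset.univ) * jointProb n B x e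

/-- The first-order partial derivative `∂G/∂x_i` at `x`. -/
def pderiv (n : Fin K → ℕ) (G : (Elem n → ℝ) → ℝ) (i : Elem n) (x : Elem n → ℝ) : ℝ :=
  deriv (fun t => G (Function.update x i t)) (x i)

/-- The gradient `∇G(x)`. -/
def grad (n : Fin K → ℕ) (G : (Elem n → ℝ) → ℝ) (x : Elem n → ℝ) : Elem n → ℝ :=
  fun i => pderiv n G i x

/-- The second-order partial derivative `∂²G/∂x_i∂x_j` at `x`. -/
def pderiv2 (n : Fin K → ℕ) (G : (Elem n → ℝ) → ℝ) (i j : Elem n) (x : Elem n → ℝ) : ℝ :=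
  pderiv n (fun y => pderiv n G j y) i x

/-- The Euclidean inner product on `∏_k ℝ^{n_k}`. -/
def inner' (n : Fin K → ℕ) (u v : Elem n → ℝ) : ℝ := ∑ i : Elem n, u i * v i

/-- Membership in the product of simplices `∏_{k=1}^K Δ_{n_k}`. -/
def InSimplex (n : Fin K → ℕ) (x : Elem n → ℝ) : Prop :=
  (∀ i, 0 ≤ x i) ∧ ∀ k : Fin K, ∑ m : Fin (n k), x ⟨k, m⟩ ≤ 1

/-- Feasibility for the partition constraint: `|S ∩ V_k| ≤ B_k` for all `k`. -/
def Feasible (n B : Fin K → ℕ) (S : Finset (Elem n)) : Prop :=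
  ∀ k : Fin K, (S.filter fun i => i.1 = k).card ≤ B k

/-- Monotonicity of a set function. -/
def MonotoneSet (n : Fin K → ℕ) (f : Finset (Elem n) → ℝ) : Prop :=
  ∀ A B : Finset (Elem n), A ⊆ B → f A ≤ f B

/-- The marginal contribution `f(v|A) = f(A ∪ {v}) - f(A)`. -/
def marg (n : Fin K → ℕ) (f : Finset (Elem n) → ℝ) (v : Elem n) (A : Finset (Elem n)) : ℝ :=
  f (insert v A) - f A

/-- `α`-weak DR-submodularity: `f(v|A) ≥ α·f(v|B)` for all `A ⊆ B` and `v ∉ B`. -/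
def WeaklyDR (n : Fin K → ℕ) (f : Finset (Elem n) → ℝ) (α : ℝ) : Prop :=
  ∀ A B : Finset (Elem n), A ⊆ B → ∀ v, v ∉ B → α * marg n f v B ≤ marg n f v A

/-- `γ`-weak submodularity from below. -/
def WeaklyBelow (n : Fin K → ℕ) (f : Finset (Elem n) → ℝ) (γ : ℝ) : Prop :=
  ∀ A B : Finset (Elem n), A ⊆ B → γ * (f B - f A) ≤ ∑ v ∈ B \ A, marg n f v A

/-- `β`-weak submodularity from above. -/
def WeaklyAbove (n : Fin K → ℕ) (f : Finset (Elem n) → ℝ) (β : ℝ) : Prop :=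
  ∀ A B : Finset (Elem n), A ⊆ B → ∑ v ∈ B \ A, marg n f v (B.erase v) ≤ β * (f B - f A)

/-- The scaled indicator vector `Σ_{k=1}^K (1/B_k)·1_{S∩V_k}`. -/
def indVec (n B : Fin K → ℕ) (S : Finset (Elem n)) : Elem n → ℝ :=
  fun i => if i ∈ S then ((B i.1 : ℝ))⁻¹ else 0

section Aux

variable {K : ℕ}

/-- Derivative coefficient of `prob n (update y i t) k' o` with respect to `t`. -/
def dcoefO (n : Fin K → ℕ) (i : Elem n) (k' : Fin K) : Option (Fin (n k')) → ℝ
  | some m' => if (⟨k', m'⟩ : Elem n) = i then 1 else 0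
  | none => if k' = i.1 then -1 else 0

lemma smk_inj {α : Type*} {γ : α → Type*} {i : α} {a b : γ i}
    (h : (⟨i, a⟩ : Σ j, γ j) = ⟨i, b⟩) : a = b :=
  sigma_mk_injective h

lemma dcoefO_of_ne (n : Fin K → ℕ) (i : Elem n) (k' : Fin K) (h : k' ≠ i.1)
    (o : Option (Fin (n k'))) : dcoefO n i k' o = 0 := by
  cases o with
  | some m' =>
    have : (⟨k', m'⟩ : Elem n) ≠ i := fun he => h (congrArg Sigma.fst he)
    simp [dcoefO, this]
  | none => simp [dcoefO, h]

lemma prob_hasDerivAt (n : Fin K → ℕ) (y : Elem n → ℝ) (i : Elem n) (k' : Fin K)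
    (o : Option (Fin (n k'))) (t₀ : ℝ) :
    HasDerivAt (fun t => prob n (Function.update y i t) k' o) (dcoefO n i k' o) t₀ := by
  cases o with
  | some m' =>
    by_cases h : (⟨k', m'⟩ : Elem n) = i
    · simpa [prob, dcoefO, h, Function.update_apply] using (hasDerivAt_id' t₀)
    · simpa [prob, dcoefO, h, Function.update_apply] using (hasDerivAt_const t₀ (y ⟨k', m'⟩))
  | none =>
    by_cases h : k' = i.1
    · obtain ⟨ik, im⟩ := i
      dsimp at h
      subst h
      have hsum : ∀ t : ℝ, ∑ m'' : Fin (n k'), Function.update y ⟨k', im⟩ t ⟨k', m''⟩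
          = t + ∑ m'' ∈ Finset.univ \ {im}, y ⟨k', m''⟩ := by
        intro t
        have hfun : (fun m'' : Fin (n k') => Function.update y ⟨k', im⟩ t ⟨k', m''⟩)
            = Function.update (fun m'' : Fin (n k') => y ⟨k', m''⟩) im t := by
          funext m''
          simp only [Function.update_apply, Sigma.mk.inj_iff, heq_eq_eq, true_and]
        rw [hfun]
        exact Finset.sum_update_of_mem (Finset.mem_univ im) (fun m'' => y ⟨k', m''⟩) t
      have : (fun t => prob n (Function.update y ⟨k', im⟩ t) k' none)
          = fun t => (1 - ∑ m'' ∈ Finset.univ \ {im}, y ⟨k', m''⟩) - t := by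
        funext t
        simp only [prob, hsum]
        ring
      rw [this]
      simpa [dcoefO] using
        ((hasDerivAt_const t₀ (1 - ∑ m'' ∈ Finset.univ \ {im}, y ⟨k', m''⟩)).fun_sub
          (hasDerivAt_id' t₀))
    · have hconst : ∀ t, prob n (Function.update y i t) k' none = prob n y k' none := by
        intro t
        simp only [prob]
        congr 1
        refine Finset.sum_congr rfl fun m'' _ => ?_
        refine Function.update_of_ne (fun he => h ?_) _ _
        exact (congrArg Sigma.fst he).symm ▸ rfl
      simp only [hconst]
      simpa [dcoefO, h] using hasDerivAt_const t₀ (prob n y k' none)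

lemma sum_prob (n : Fin K → ℕ) (x : Elem n → ℝ) (k' : Fin K) :
    ∑ o : Option (Fin (n k')), prob n x k' o = 1 := by
  rw [Fintype.sum_option]
  simp [prob]

/-- The generic first-derivative computation for sums of products of `prob` factors. -/
lemma pderiv_sum_prod {ι : Type*} [Fintype ι] (n B : Fin K → ℕ)
    (E : ι → Choice n B) (A : ι → Finset (Slot B)) (c : ι → ℝ) (i : Elem n) (y : Elem n → ℝ) :
    pderiv n (fun z => ∑ l : ι, c l * ∏ s ∈ A l, prob n z s.1 (E l s)) i y
      = ∑ l : ι, c l * ∑ s ∈ A l, dcoefO n i s.1 (E l s) *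
          ∏ s' ∈ (A l).erase s, prob n y s'.1 (E l s') := by
  have H : HasDerivAt
      (fun t => ∑ l : ι, c l * ∏ s ∈ A l, prob n (Function.update y i t) s.1 (E l s))
      (∑ l : ι, c l * ∑ s ∈ A l, dcoefO n i s.1 (E l s) *
          ∏ s' ∈ (A l).erase s, prob n y s'.1 (E l s')) (y i) := by
    apply HasDerivAt.fun_sum
    intro l _
    have hp : HasDerivAt
        (fun t => ∏ s ∈ A l, prob n (Function.update y i t) s.1 (E l s))
        (∑ s ∈ A l, (∏ s' ∈ (A l).erase s,
            prob n (Function.update y i (y i)) s'.1 (E l s')) • dcoefO n i s.1 (E l s)) (y i) :=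
      HasDerivAt.fun_finsetProd (fun s _ => prob_hasDerivAt n y i s.1 (E l s) (y i))
    rw [Function.update_eq_self] at hp
    have := hp.const_mul (c l)
    convert this using 2
    · rfl
    refine Finset.sum_congr rfl fun s _ => ?_
    rw [smul_eq_mul, mul_comm]
  exact H.deriv

end Aux
section Aux2

variable {K : ℕ}

lemma chosen_update_not_mem (n B : Fin K → ℕ) (e : Choice n B) (s : Slot B)
    (o : Option (Fin (n s.1))) (A : Finset (Slot B)) (hA : s ∉ A) :
    chosen n B (Function.update e s o) A = chosen n B e A := by
  unfold chosen
  refine Finset.biUnion_congr rfl fun s' hs' => ?_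
  rw [Function.update_of_ne (ne_of_mem_of_not_mem hs' hA)]

lemma chosen_insert_split (n B : Fin K → ℕ) (e : Choice n B) (s : Slot B)
    (A : Finset (Slot B)) (hA : s ∈ A) :
    chosen n B e A = ((e s).map fun m => (⟨s.1, m⟩ : Elem n)).toFinset ∪ chosen n B e (A.erase s) := by
  conv_lhs => rw [← Finset.insert_erase hA]
  rw [chosen, Finset.biUnion_insert]
  rfl

lemma chosen_update_some (n B : Fin K → ℕ) (e : Choice n B) (s : Slot B)
    (m : Fin (n s.1)) (A : Finset (Slot B)) (hA : s ∈ A) :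
    chosen n B (Function.update e s (some m)) A
      = insert (⟨s.1, m⟩ : Elem n) (chosen n B e (A.erase s)) := by
  rw [chosen_insert_split n B _ s A hA, Function.update_self,
    chosen_update_not_mem n B e s (some m) (A.erase s) (Finset.notMem_erase s A)]
  simp [Finset.insert_eq, -Finset.singleton_union]

lemma chosen_update_none (n B : Fin K → ℕ) (e : Choice n B) (s : Slot B)
    (A : Finset (Slot B)) (hA : s ∈ A) :
    chosen n B (Function.update e s none) A = chosen n B e (A.erase s) := by
  rw [chosen_insert_split n B _ s A hA, Function.update_self,
    chosen_update_not_mem n B e s none (A.erase s) (Finset.notMem_erase s A)]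
  simp

/-- Conditioning on the outcome of one slot. -/
lemma key_sum (n B : Fin K → ℕ) (x : Elem n → ℝ) (s : Slot B)
    (φ : Option (Fin (n s.1)) → ℝ) (Ψ : Choice n B → Option (Fin (n s.1)) → ℝ)
    (hΨ : ∀ e o o', Ψ (Function.update e s o') o = Ψ e o) :
    ∑ e : Choice n B, φ (e s) * Ψ e (e s)
      = ∑ e : Choice n B, prob n x s.1 (e s) * ∑ o : Option (Fin (n s.1)), φ o * Ψ e o := by
  classical
  set E := Equiv.piSplitAt s (fun s' : Slot B => Option (Fin (n s'.1))) with hE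
  have hsplit : ∀ (G : Choice n B → ℝ),
      ∑ e : Choice n B, G e = ∑ o : Option (Fin (n s.1)),
        ∑ r : (∀ j : { j : Slot B // j ≠ s }, Option (Fin (n j.1.1))), G (E.symm (o, r)) := by
    intro G
    rw [← E.symm.sum_comp G, Fintype.sum_prod_type]
  have happ : ∀ o r, E.symm (o, r) s = o := by
    intro o r
    simp [hE, Equiv.piSplitAt_symm_apply]
  have hupd : ∀ o o' r, E.symm (o, r) = Function.update (E.symm (o', r)) s o := by
    intro o o' r
    funext j
    by_cases h : j = s
    · subst h
      rw [happ, Function.update_self]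
    · rw [Function.update_of_ne h]
      simp [hE, Equiv.piSplitAt_symm_apply, h]
  have hΨ' : ∀ o o' r oo, Ψ (E.symm (o, r)) oo = Ψ (E.symm (o', r)) oo := by
    intro o o' r oo
    rw [hupd o o' r, hΨ]
  rw [hsplit, hsplit]
  have lhs_eq : ∀ o r, φ ((E.symm (o, r)) s) * Ψ (E.symm (o, r)) ((E.symm (o, r)) s)
      = φ o * Ψ (E.symm (none, r)) o := by
    intro o r
    rw [happ, hΨ' o none r]
  have rhs_eq : ∀ o r, prob n x s.1 ((E.symm (o, r)) s) *
        ∑ oo : Option (Fin (n s.1)), φ oo * Ψ (E.symm (o, r)) oo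
      = prob n x s.1 o * ∑ oo : Option (Fin (n s.1)), φ oo * Ψ (E.symm (none, r)) oo := by
    intro o r
    rw [happ]
    congr 1
    exact Finset.sum_congr rfl fun oo _ => by rw [hΨ' o none r]
  calc ∑ o, ∑ r, φ ((E.symm (o, r)) s) * Ψ (E.symm (o, r)) ((E.symm (o, r)) s)
      = ∑ o : Option (Fin (n s.1)), ∑ r, φ o * Ψ (E.symm (none, r)) o := by
        refine Finset.sum_congr rfl fun o _ => Finset.sum_congr rfl fun r _ => lhs_eq o r
    _ = ∑ r, ∑ o : Option (Fin (n s.1)), φ o * Ψ (E.symm (none, r)) o := Finset.sum_comm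
    _ = ∑ o : Option (Fin (n s.1)), prob n x s.1 o *
          ∑ r, ∑ oo : Option (Fin (n s.1)), φ oo * Ψ (E.symm (none, r)) oo := by
        rw [← Finset.sum_mul, sum_prob, one_mul, Finset.sum_comm]
    _ = ∑ o, ∑ r, prob n x s.1 ((E.symm (o, r)) s) *
          ∑ oo : Option (Fin (n s.1)), φ oo * Ψ (E.symm (o, r)) oo := by
        refine Finset.sum_congr rfl fun o _ => ?_
        rw [Finset.mul_sum]
        exact Finset.sum_congr rfl fun r _ => (rhs_eq o r).symm

end Aux2
section Aux3

variable {K : ℕ}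

lemma pderiv_ME (n B : Fin K → ℕ) (f : Finset (Elem n) → ℝ) (j : Elem n) (y : Elem n → ℝ) :
    pderiv n (ME n B f) j y = ∑ p : Choice n B × Slot B,
      (f (chosen n B p.1 Finset.univ) * dcoefO n j p.2.1 (p.1 p.2)) *
        ∏ s' ∈ Finset.univ.erase p.2, prob n y s'.1 (p.1 s') := by
  have h := pderiv_sum_prod n B (fun e : Choice n B => e) (fun _ => Finset.univ)
      (fun e => f (chosen n B e Finset.univ)) j y
  rw [Fintype.sum_prod_type]
  rw [show (ME n B f) = (fun z => ∑ l : Choice n B,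
      f (chosen n B l Finset.univ) * ∏ s ∈ Finset.univ, prob n z s.1 (l s)) from rfl, h]
  refine Finset.sum_congr rfl fun e _ => ?_
  rw [Finset.mul_sum]
  exact Finset.sum_congr rfl fun s _ => by ring

set_option maxHeartbeats 1600000 in
lemma pderiv2_ME (n B : Fin K → ℕ) (f : Finset (Elem n) → ℝ) (i j : Elem n) (x : Elem n → ℝ) :
    pderiv2 n (ME n B f) i j x = ∑ p : Choice n B × Slot B,
      (f (chosen n B p.1 Finset.univ) * dcoefO n j p.2.1 (p.1 p.2)) *
        ∑ s'' ∈ Finset.univ.erase p.2, dcoefO n i s''.1 (p.1 s'') *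
          ∏ s' ∈ (Finset.univ.erase p.2).erase s'', prob n x s'.1 (p.1 s') := by
  have hfun : (fun y => pderiv n (ME n B f) j y) = fun y => ∑ p : Choice n B × Slot B,
      (f (chosen n B p.1 Finset.univ) * dcoefO n j p.2.1 (p.1 p.2)) *
        ∏ s' ∈ Finset.univ.erase p.2, prob n y s'.1 (p.1 s') := funext (pderiv_ME n B f j)
  show pderiv n (fun y => pderiv n (ME n B f) j y) i x = _
  rw [hfun]
  exact pderiv_sum_prod n B (fun p : Choice n B × Slot B => p.1)
    (fun p => Finset.univ.erase p.2)
    (fun p => f (chosen n B p.1 Finset.univ) * dcoefO n j p.2.1 (p.1 p.2)) i x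

def slotPerm (B : Fin K → ℕ) (τ : ∀ k', Fin (B k') ≃ Fin (B k')) : Slot B → Slot B :=
  fun s => ⟨s.1, τ s.1 s.2⟩

lemma slotPerm_bijective (B : Fin K → ℕ) (τ : ∀ k', Fin (B k') ≃ Fin (B k')) :
    Function.Bijective (slotPerm B τ) := by
  refine Function.bijective_iff_has_inverse.mpr
    ⟨slotPerm B (fun k' => (τ k').symm), fun s => ?_, fun s => ?_⟩
  · obtain ⟨a, b⟩ := s; simp [slotPerm]; exact (τ a).symm_apply_apply b
  · obtain ⟨a, b⟩ := s; simp [slotPerm]; exact (τ a).apply_symm_apply b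

def choicePerm (n B : Fin K → ℕ) (τ : ∀ k', Fin (B k') ≃ Fin (B k')) (e : Choice n B) :
    Choice n B := fun s => e (slotPerm B τ s)

lemma choicePerm_bijective (n B : Fin K → ℕ) (τ : ∀ k', Fin (B k') ≃ Fin (B k')) :
    Function.Bijective (choicePerm n B τ) := by
  refine Function.bijective_iff_has_inverse.mpr
    ⟨choicePerm n B (fun k' => (τ k').symm), fun e => ?_, fun e => ?_⟩
  · funext s
    obtain ⟨a, b⟩ := s
    show e ⟨a, τ a ((τ a).symm b)⟩ = e ⟨a, b⟩
    rw [Equiv.apply_symm_apply]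
  · funext s
    obtain ⟨a, b⟩ := s
    show e ⟨a, (τ a).symm (τ a b)⟩ = e ⟨a, b⟩
    rw [Equiv.symm_apply_apply]

lemma jointProb_perm (n B : Fin K → ℕ) (x : Elem n → ℝ) (τ : ∀ k', Fin (B k') ≃ Fin (B k'))
    (e : Choice n B) : jointProb n B x (choicePerm n B τ e) = jointProb n B x e := by
  unfold jointProb choicePerm
  exact Fintype.prod_bijective (slotPerm B τ) (slotPerm_bijective B τ)
    (fun s' => prob n x s'.1 (e (slotPerm B τ s'))) (fun s => prob n x s.1 (e s))
    (fun s' => rfl)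

lemma chosen_perm (n B : Fin K → ℕ) (τ : ∀ k', Fin (B k') ≃ Fin (B k')) (e : Choice n B)
    (A : Finset (Slot B)) :
    chosen n B (choicePerm n B τ e) A = chosen n B e (A.image (slotPerm B τ)) := by
  rw [chosen, chosen, Finset.image_biUnion]
  exact Finset.biUnion_congr rfl fun s _ => rfl

def extendPerm (B : Fin K → ℕ) (k : Fin K) (π : Fin (B k) ≃ Fin (B k)) :
    ∀ k', Fin (B k') ≃ Fin (B k') := fun k' =>
  if h : k' = k then Eq.rec (motive := fun z _ => Fin (B z) ≃ Fin (B z)) π h.symm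
  else Equiv.refl _

lemma extendPerm_self (B : Fin K → ℕ) (k : Fin K) (π : Fin (B k) ≃ Fin (B k)) :
    extendPerm B k π k = π := by
  unfold extendPerm
  rw [dif_pos rfl]

lemma sum_chosen_perm (n B : Fin K → ℕ) (x : Elem n → ℝ) (gg : Finset (Elem n) → ℝ)
    (k : Fin K) (cb cb' sb sb' : Fin (B k)) (hc : cb ≠ cb') (hs : sb ≠ sb') :
    ∑ e : Choice n B,
        gg (chosen n B e ((Finset.univ.erase ⟨k, sb⟩).erase ⟨k, sb'⟩)) * jointProb n B x e
      = ∑ e : Choice n B,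
        gg (chosen n B e ((Finset.univ.erase ⟨k, cb⟩).erase ⟨k, cb'⟩)) * jointProb n B x e := by
  classical
  set σ₁ := Equiv.swap cb sb with hσ₁
  have h1 : σ₁ cb = sb := Equiv.swap_apply_left _ _
  have hne : σ₁ cb' ≠ sb := fun h => hc ((σ₁.injective (h.trans h1.symm)).symm)
  set π := σ₁.trans (Equiv.swap (σ₁ cb') sb') with hπ
  have hπ1 : π cb = sb := by
    rw [hπ, Equiv.trans_apply, h1]
    exact Equiv.swap_apply_of_ne_of_ne (Ne.symm hne) hs
  have hπ2 : π cb' = sb' := by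
    rw [hπ, Equiv.trans_apply]
    exact Equiv.swap_apply_left _ _
  set τ := extendPerm B k π with hτ
  have hslot1 : slotPerm B τ ⟨k, cb⟩ = ⟨k, sb⟩ := by
    show (⟨k, τ k cb⟩ : Slot B) = ⟨k, sb⟩
    rw [hτ, extendPerm_self, hπ1]
  have hslot2 : slotPerm B τ ⟨k, cb'⟩ = ⟨k, sb'⟩ := by
    show (⟨k, τ k cb'⟩ : Slot B) = ⟨k, sb'⟩
    rw [hτ, extendPerm_self, hπ2]
  have hinj : Function.Injective (slotPerm B τ) := (slotPerm_bijective B τ).injective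
  have himage : ((Finset.univ.erase ⟨k, cb⟩).erase ⟨k, cb'⟩).image (slotPerm B τ)
      = (Finset.univ.erase ⟨k, sb⟩).erase ⟨k, sb'⟩ := by
    rw [Finset.image_erase hinj, Finset.image_erase hinj,
      Finset.image_univ_of_surjective (slotPerm_bijective B τ).surjective, hslot1, hslot2]
  exact Fintype.sum_bijective (choicePerm n B τ) (choicePerm_bijective n B τ) _ _
    (fun e => by rw [chosen_perm, jointProb_perm, himage])

lemma card_filter_fst (B : Fin K → ℕ) (k : Fin K) :
    (Finset.univ.filter fun s : Slot B => s.1 = k).card = B k := by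
  have hset : (Finset.univ.filter fun s : Slot B => s.1 = k)
      = Finset.univ.image (fun b : Fin (B k) => (⟨k, b⟩ : Slot B)) := by
    ext ⟨a, b⟩
    simp only [Finset.mem_filter, Finset.mem_univ, true_and, Finset.mem_image]
    constructor
    · rintro rfl; exact ⟨b, rfl⟩
    · rintro ⟨b', hb⟩; exact (congrArg Sigma.fst hb).symm
  rw [hset, Finset.card_image_of_injective _ sigma_mk_injective, Finset.card_univ,
    Fintype.card_fin]

end Aux3
section Aux4

variable {K : ℕ}

lemma prod_prob_update (n B : Fin K → ℕ) (x : Elem n → ℝ) (A : Finset (Slot B))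
    (e : Choice n B) (s : Slot B) (o : Option (Fin (n s.1))) (hs : s ∉ A) :
    ∏ s' ∈ A, prob n x s'.1 (Function.update e s o s')
      = ∏ s' ∈ A, prob n x s'.1 (e s') :=
  Finset.prod_congr rfl fun s' hs' => by
    rw [Function.update_of_ne (ne_of_mem_of_not_mem hs' hs)]

lemma W_collapse (n B : Fin K → ℕ) (f : Finset (Elem n) → ℝ) (x : Elem n → ℝ)
    (k : Fin K) (m₁ m₂ : Fin (n k)) (sb sb'' : Fin (B k)) (hne : sb ≠ sb'') :
    (∑ e : Choice n B, (f (chosen n B e Finset.univ) * dcoefO n ⟨k, m₂⟩ k (e ⟨k, sb⟩)) *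
        (dcoefO n ⟨k, m₁⟩ k (e ⟨k, sb''⟩) *
          ∏ s' ∈ (Finset.univ.erase (⟨k, sb⟩ : Slot B)).erase ⟨k, sb''⟩,
            prob n x s'.1 (e s')))
      = ∑ e : Choice n B,
          (marg n f ⟨k, m₁⟩ (insert ⟨k, m₂⟩
              (chosen n B e ((Finset.univ.erase (⟨k, sb''⟩ : Slot B)).erase ⟨k, sb⟩))) -
            marg n f ⟨k, m₁⟩
              (chosen n B e ((Finset.univ.erase (⟨k, sb''⟩ : Slot B)).erase ⟨k, sb⟩))) *
            jointProb n B x e := by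
  classical
  have hss : (⟨k, sb⟩ : Slot B) ≠ ⟨k, sb''⟩ := fun h => hne (smk_inj (γ := fun k' => Fin (B k')) h)
  have hmem1 : (⟨k, sb⟩ : Slot B) ∈ Finset.univ.erase (⟨k, sb''⟩ : Slot B) :=
    Finset.mem_erase.mpr ⟨hss, Finset.mem_univ _⟩
  have hmem2 : (⟨k, sb''⟩ : Slot B) ∈ Finset.univ.erase (⟨k, sb⟩ : Slot B) :=
    Finset.mem_erase.mpr ⟨Ne.symm hss, Finset.mem_univ _⟩
  have hnm2 : (⟨k, sb''⟩ : Slot B) ∉ (Finset.univ.erase (⟨k, sb⟩ : Slot B)).erase ⟨k, sb''⟩ :=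
    Finset.notMem_erase _ _
  have hnm1 : (⟨k, sb⟩ : Slot B) ∉ (Finset.univ.erase (⟨k, sb⟩ : Slot B)).erase ⟨k, sb''⟩ :=
    fun h => Finset.notMem_erase _ _ (Finset.mem_of_mem_erase h)
  -- step 1 : condition on the outcome of slot ⟨k, sb''⟩
  have hΨ₁ : ∀ (e : Choice n B) (o o' : Option (Fin (n k))),
      ((f (chosen n B (Function.update (Function.update e ⟨k, sb''⟩ o') ⟨k, sb''⟩ o)
            Finset.univ) *
          dcoefO n ⟨k, m₂⟩ k (Function.update e ⟨k, sb''⟩ o' ⟨k, sb⟩)) *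
        ∏ s' ∈ (Finset.univ.erase (⟨k, sb⟩ : Slot B)).erase ⟨k, sb''⟩,
          prob n x s'.1 (Function.update e ⟨k, sb''⟩ o' s'))
      = (f (chosen n B (Function.update e ⟨k, sb''⟩ o) Finset.univ) *
          dcoefO n ⟨k, m₂⟩ k (e ⟨k, sb⟩)) *
        ∏ s' ∈ (Finset.univ.erase (⟨k, sb⟩ : Slot B)).erase ⟨k, sb''⟩,
          prob n x s'.1 (e s') := by
    intro e o o'
    rw [Function.update_idem, Function.update_of_ne hss,
      prod_prob_update n B x _ e ⟨k, sb''⟩ o' hnm2]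
  have hkey1 := key_sum n B x ⟨k, sb''⟩ (dcoefO n ⟨k, m₁⟩ k)
    (fun e o => (f (chosen n B (Function.update e ⟨k, sb''⟩ o) Finset.univ) *
        dcoefO n ⟨k, m₂⟩ k (e ⟨k, sb⟩)) *
      ∏ s' ∈ (Finset.univ.erase (⟨k, sb⟩ : Slot B)).erase ⟨k, sb''⟩, prob n x s'.1 (e s'))
    hΨ₁
  -- inner sum computation for step 1
  have hinner1 : ∀ e : Choice n B,
      (∑ o : Option (Fin (n k)), dcoefO n ⟨k, m₁⟩ k o *
        ((f (chosen n B (Function.update e ⟨k, sb''⟩ o) Finset.univ) *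
            dcoefO n ⟨k, m₂⟩ k (e ⟨k, sb⟩)) *
          ∏ s' ∈ (Finset.univ.erase (⟨k, sb⟩ : Slot B)).erase ⟨k, sb''⟩, prob n x s'.1 (e s')))
      = marg n f ⟨k, m₁⟩ (chosen n B e (Finset.univ.erase ⟨k, sb''⟩)) *
          (dcoefO n ⟨k, m₂⟩ k (e ⟨k, sb⟩) *
            ∏ s' ∈ (Finset.univ.erase (⟨k, sb⟩ : Slot B)).erase ⟨k, sb''⟩,
              prob n x s'.1 (e s')) := by
    intro e
    rw [Fintype.sum_option]
    have h1 : ∑ m' : Fin (n k), dcoefO n ⟨k, m₁⟩ k (some m') *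
        ((f (chosen n B (Function.update e ⟨k, sb''⟩ (some m')) Finset.univ) *
            dcoefO n ⟨k, m₂⟩ k (e ⟨k, sb⟩)) *
          ∏ s' ∈ (Finset.univ.erase (⟨k, sb⟩ : Slot B)).erase ⟨k, sb''⟩, prob n x s'.1 (e s'))
        = (f (chosen n B (Function.update e ⟨k, sb''⟩ (some m₁)) Finset.univ) *
            dcoefO n ⟨k, m₂⟩ k (e ⟨k, sb⟩)) *
          ∏ s' ∈ (Finset.univ.erase (⟨k, sb⟩ : Slot B)).erase ⟨k, sb''⟩,
            prob n x s'.1 (e s') := by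
      rw [Finset.sum_eq_single m₁]
      · simp [dcoefO]
      · intro m' _ hm'
        have hne' : (⟨k, m'⟩ : Elem n) ≠ ⟨k, m₁⟩ := fun h => hm' (smk_inj (γ := fun k' => Fin (n k')) h)
        simp [dcoefO, hne']
      · intro h; exact absurd (Finset.mem_univ m₁) h
    rw [h1, chosen_update_some n B e ⟨k, sb''⟩ m₁ Finset.univ (Finset.mem_univ _),
      chosen_update_none n B e ⟨k, sb''⟩ Finset.univ (Finset.mem_univ _)]
    have hd : dcoefO n ⟨k, m₁⟩ k none = -1 := by simp [dcoefO]
    rw [hd, marg]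
    ring
  -- step 2 : condition on the outcome of slot ⟨k, sb⟩
  have hΨ₂ : ∀ (e : Choice n B) (o o' : Option (Fin (n k))),
      (prob n x k (Function.update e ⟨k, sb⟩ o' ⟨k, sb''⟩) *
        (marg n f ⟨k, m₁⟩ (chosen n B
            (Function.update (Function.update e ⟨k, sb⟩ o') ⟨k, sb⟩ o)
            (Finset.univ.erase ⟨k, sb''⟩)) *
          ∏ s' ∈ (Finset.univ.erase (⟨k, sb⟩ : Slot B)).erase ⟨k, sb''⟩,
            prob n x s'.1 (Function.update e ⟨k, sb⟩ o' s')))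
      = prob n x k (e ⟨k, sb''⟩) *
        (marg n f ⟨k, m₁⟩ (chosen n B (Function.update e ⟨k, sb⟩ o)
            (Finset.univ.erase ⟨k, sb''⟩)) *
          ∏ s' ∈ (Finset.univ.erase (⟨k, sb⟩ : Slot B)).erase ⟨k, sb''⟩,
            prob n x s'.1 (e s')) := by
    intro e o o'
    rw [Function.update_idem, Function.update_of_ne (Ne.symm hss),
      prod_prob_update n B x _ e ⟨k, sb⟩ o' hnm1]
  have hkey2 := key_sum n B x ⟨k, sb⟩ (dcoefO n ⟨k, m₂⟩ k)
    (fun e o => prob n x k (e ⟨k, sb''⟩) *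
      (marg n f ⟨k, m₁⟩ (chosen n B (Function.update e ⟨k, sb⟩ o)
          (Finset.univ.erase ⟨k, sb''⟩)) *
        ∏ s' ∈ (Finset.univ.erase (⟨k, sb⟩ : Slot B)).erase ⟨k, sb''⟩, prob n x s'.1 (e s')))
    hΨ₂
  have hinner2 : ∀ e : Choice n B,
      (∑ o : Option (Fin (n k)), dcoefO n ⟨k, m₂⟩ k o *
        (prob n x k (e ⟨k, sb''⟩) *
          (marg n f ⟨k, m₁⟩ (chosen n B (Function.update e ⟨k, sb⟩ o)
              (Finset.univ.erase ⟨k, sb''⟩)) *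
            ∏ s' ∈ (Finset.univ.erase (⟨k, sb⟩ : Slot B)).erase ⟨k, sb''⟩,
              prob n x s'.1 (e s'))))
      = (marg n f ⟨k, m₁⟩ (insert ⟨k, m₂⟩
            (chosen n B e ((Finset.univ.erase (⟨k, sb''⟩ : Slot B)).erase ⟨k, sb⟩))) -
          marg n f ⟨k, m₁⟩
            (chosen n B e ((Finset.univ.erase (⟨k, sb''⟩ : Slot B)).erase ⟨k, sb⟩))) *
        (prob n x k (e ⟨k, sb''⟩) *
          ∏ s' ∈ (Finset.univ.erase (⟨k, sb⟩ : Slot B)).erase ⟨k, sb''⟩,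
            prob n x s'.1 (e s')) := by
    intro e
    rw [Fintype.sum_option]
    have h1 : ∑ m' : Fin (n k), dcoefO n ⟨k, m₂⟩ k (some m') *
        (prob n x k (e ⟨k, sb''⟩) *
          (marg n f ⟨k, m₁⟩ (chosen n B (Function.update e ⟨k, sb⟩ (some m'))
              (Finset.univ.erase ⟨k, sb''⟩)) *
            ∏ s' ∈ (Finset.univ.erase (⟨k, sb⟩ : Slot B)).erase ⟨k, sb''⟩,
              prob n x s'.1 (e s')))
        = prob n x k (e ⟨k, sb''⟩) *
          (marg n f ⟨k, m₁⟩ (chosen n B (Function.update e ⟨k, sb⟩ (some m₂))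
              (Finset.univ.erase ⟨k, sb''⟩)) *
            ∏ s' ∈ (Finset.univ.erase (⟨k, sb⟩ : Slot B)).erase ⟨k, sb''⟩,
              prob n x s'.1 (e s')) := by
      rw [Finset.sum_eq_single m₂]
      · simp [dcoefO]
      · intro m' _ hm'
        have hne' : (⟨k, m'⟩ : Elem n) ≠ ⟨k, m₂⟩ := fun h => hm' (smk_inj (γ := fun k' => Fin (n k')) h)
        simp [dcoefO, hne']
      · intro h; exact absurd (Finset.mem_univ m₂) h
    rw [h1, chosen_update_some n B e ⟨k, sb⟩ m₂ (Finset.univ.erase ⟨k, sb''⟩) hmem1,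
      chosen_update_none n B e ⟨k, sb⟩ (Finset.univ.erase ⟨k, sb''⟩) hmem1]
    have hd : dcoefO n ⟨k, m₂⟩ k none = -1 := by simp [dcoefO]
    rw [hd]
    ring
  -- joint probability factorization
  have hjoint : ∀ e : Choice n B, jointProb n B x e
      = prob n x k (e ⟨k, sb⟩) * (prob n x k (e ⟨k, sb''⟩) *
          ∏ s' ∈ (Finset.univ.erase (⟨k, sb⟩ : Slot B)).erase ⟨k, sb''⟩,
            prob n x s'.1 (e s')) := by
    intro e
    rw [jointProb, ← Finset.mul_prod_erase Finset.univ
        (fun s' => prob n x s'.1 (e s')) (Finset.mem_univ (⟨k, sb⟩ : Slot B)),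
      ← Finset.mul_prod_erase _ (fun s' => prob n x s'.1 (e s')) hmem2]
  -- assemble
  calc (∑ e : Choice n B, (f (chosen n B e Finset.univ) * dcoefO n ⟨k, m₂⟩ k (e ⟨k, sb⟩)) *
        (dcoefO n ⟨k, m₁⟩ k (e ⟨k, sb''⟩) *
          ∏ s' ∈ (Finset.univ.erase (⟨k, sb⟩ : Slot B)).erase ⟨k, sb''⟩,
            prob n x s'.1 (e s')))
      = ∑ e : Choice n B, dcoefO n ⟨k, m₁⟩ k (e ⟨k, sb''⟩) *
          ((f (chosen n B (Function.update e ⟨k, sb''⟩ (e ⟨k, sb''⟩)) Finset.univ) *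
              dcoefO n ⟨k, m₂⟩ k (e ⟨k, sb⟩)) *
            ∏ s' ∈ (Finset.univ.erase (⟨k, sb⟩ : Slot B)).erase ⟨k, sb''⟩,
              prob n x s'.1 (e s')) := by
        refine Finset.sum_congr rfl fun e _ => ?_
        rw [Function.update_eq_self]
        ring
    _ = ∑ e : Choice n B, prob n x k (e ⟨k, sb''⟩) *
          ∑ o : Option (Fin (n k)), dcoefO n ⟨k, m₁⟩ k o *
            ((f (chosen n B (Function.update e ⟨k, sb''⟩ o) Finset.univ) *
                dcoefO n ⟨k, m₂⟩ k (e ⟨k, sb⟩)) *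
              ∏ s' ∈ (Finset.univ.erase (⟨k, sb⟩ : Slot B)).erase ⟨k, sb''⟩,
                prob n x s'.1 (e s')) := hkey1
    _ = ∑ e : Choice n B, dcoefO n ⟨k, m₂⟩ k (e ⟨k, sb⟩) *
          (prob n x k (e ⟨k, sb''⟩) *
            (marg n f ⟨k, m₁⟩ (chosen n B (Function.update e ⟨k, sb⟩ (e ⟨k, sb⟩))
                (Finset.univ.erase ⟨k, sb''⟩)) *
              ∏ s' ∈ (Finset.univ.erase (⟨k, sb⟩ : Slot B)).erase ⟨k, sb''⟩,
                prob n x s'.1 (e s'))) := by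
        refine Finset.sum_congr rfl fun e _ => ?_
        rw [hinner1 e, Function.update_eq_self]
        ring
    _ = ∑ e : Choice n B, prob n x k (e ⟨k, sb⟩) *
          ∑ o : Option (Fin (n k)), dcoefO n ⟨k, m₂⟩ k o *
            (prob n x k (e ⟨k, sb''⟩) *
              (marg n f ⟨k, m₁⟩ (chosen n B (Function.update e ⟨k, sb⟩ o)
                  (Finset.univ.erase ⟨k, sb''⟩)) *
                ∏ s' ∈ (Finset.univ.erase (⟨k, sb⟩ : Slot B)).erase ⟨k, sb''⟩,
                  prob n x s'.1 (e s'))) := hkey2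
    _ = ∑ e : Choice n B,
          (marg n f ⟨k, m₁⟩ (insert ⟨k, m₂⟩
              (chosen n B e ((Finset.univ.erase (⟨k, sb''⟩ : Slot B)).erase ⟨k, sb⟩))) -
            marg n f ⟨k, m₁⟩
              (chosen n B e ((Finset.univ.erase (⟨k, sb''⟩ : Slot B)).erase ⟨k, sb⟩))) *
            jointProb n B x e := by
        refine Finset.sum_congr rfl fun e _ => ?_
        rw [hinner2 e, hjoint e]
        ring

end Aux4
set_option maxHeartbeats 1600000 in
theorem multinoulliExtension_pderiv2_diag {K : ℕ} (n B : Fin K → ℕ) (hn : ∀ k, 1 ≤ n k)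
    (hB : ∀ k, 0 < B k) (hBn : ∀ k, B k ≤ n k)
    (f : Finset (Elem n) → ℝ) (hf0 : ∀ S, 0 ≤ f S)
    (x : Elem n → ℝ) (hx : InSimplex n x)
    (k : Fin K) (m₁ m₂ : Fin (n k)) :
    (B k = 1 → pderiv2 n (ME n B f) ⟨k, m₁⟩ ⟨k, m₂⟩ x = 0) ∧
    (∀ _h2 : 2 ≤ B k,
      pderiv2 n (ME n B f) ⟨k, m₁⟩ ⟨k, m₂⟩ x =
        ((B k : ℝ) ^ 2 - (B k : ℝ)) * ∑ e : Choice n B,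
          (marg n f ⟨k, m₁⟩
              (insert ⟨k, m₂⟩ (chosen n B e
                ((Finset.univ.erase (⟨k, ⟨0, by omega⟩⟩ : Slot B)).erase
                  (⟨k, ⟨1, by omega⟩⟩ : Slot B)))) -
            marg n f ⟨k, m₁⟩ (chosen n B e
              ((Finset.univ.erase (⟨k, ⟨0, by omega⟩⟩ : Slot B)).erase
                (⟨k, ⟨1, by omega⟩⟩ : Slot B)))) *
            jointProb n B x e) := by
  classical
  have hmain : pderiv2 n (ME n B f) ⟨k, m₁⟩ ⟨k, m₂⟩ x
      = ∑ s : Slot B, ∑ s'' ∈ Finset.univ.erase s, ∑ e : Choice n B,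
          (f (chosen n B e Finset.univ) * dcoefO n ⟨k, m₂⟩ s.1 (e s)) *
            (dcoefO n ⟨k, m₁⟩ s''.1 (e s'') *
              ∏ s' ∈ (Finset.univ.erase s).erase s'', prob n x s'.1 (e s')) := by
    calc pderiv2 n (ME n B f) ⟨k, m₁⟩ ⟨k, m₂⟩ x
        = ∑ e : Choice n B, ∑ s : Slot B, ∑ s'' ∈ Finset.univ.erase s,
            (f (chosen n B e Finset.univ) * dcoefO n ⟨k, m₂⟩ s.1 (e s)) *
              (dcoefO n ⟨k, m₁⟩ s''.1 (e s'') *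
                ∏ s' ∈ (Finset.univ.erase s).erase s'', prob n x s'.1 (e s')) := by
          rw [pderiv2_ME, Fintype.sum_prod_type]
          refine Finset.sum_congr rfl fun e _ => Finset.sum_congr rfl fun s _ => ?_
          rw [Finset.mul_sum]
      _ = ∑ s : Slot B, ∑ e : Choice n B, ∑ s'' ∈ Finset.univ.erase s,
            (f (chosen n B e Finset.univ) * dcoefO n ⟨k, m₂⟩ s.1 (e s)) *
              (dcoefO n ⟨k, m₁⟩ s''.1 (e s'') *
                ∏ s' ∈ (Finset.univ.erase s).erase s'', prob n x s'.1 (e s')) :=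
          Finset.sum_comm
      _ = ∑ s : Slot B, ∑ s'' ∈ Finset.univ.erase s, ∑ e : Choice n B,
            (f (chosen n B e Finset.univ) * dcoefO n ⟨k, m₂⟩ s.1 (e s)) *
              (dcoefO n ⟨k, m₁⟩ s''.1 (e s'') *
                ∏ s' ∈ (Finset.univ.erase s).erase s'', prob n x s'.1 (e s')) :=
          Finset.sum_congr rfl fun s _ => Finset.sum_comm
  constructor
  · intro hB1
    rw [hmain]
    refine Finset.sum_eq_zero fun s _ => Finset.sum_eq_zero fun s'' hs'' => ?_
    by_cases hs : s.1 = k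
    · by_cases hs2 : s''.1 = k
      · exfalso
        have hne12 := Finset.ne_of_mem_erase hs''
        obtain ⟨a, b⟩ := s
        obtain ⟨a2, b2⟩ := s''
        dsimp at hs hs2
        subst hs; subst hs2
        have h1 := b.isLt
        have h2 := b2.isLt
        have : b2 = b := Fin.ext (by omega)
        exact hne12 (congrArg (Sigma.mk _) this)
      · refine Finset.sum_eq_zero fun e _ => ?_
        rw [dcoefO_of_ne n ⟨k, m₁⟩ s''.1 hs2 (e s'')]
        ring
    · refine Finset.sum_eq_zero fun e _ => ?_
      rw [dcoefO_of_ne n ⟨k, m₂⟩ s.1 hs (e s)]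
      ring
  · intro h2
    rw [hmain]
    have hc01 : (⟨0, by omega⟩ : Fin (B k)) ≠ ⟨1, by omega⟩ := by
      simp [Fin.ext_iff]
    have hWk : ∀ (sb sb'' : Fin (B k)), sb ≠ sb'' →
        (∑ e : Choice n B, (f (chosen n B e Finset.univ) * dcoefO n ⟨k, m₂⟩ k (e ⟨k, sb⟩)) *
          (dcoefO n ⟨k, m₁⟩ k (e ⟨k, sb''⟩) *
            ∏ s' ∈ (Finset.univ.erase (⟨k, sb⟩ : Slot B)).erase ⟨k, sb''⟩,
              prob n x s'.1 (e s')))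
        = ∑ e : Choice n B,
            (marg n f ⟨k, m₁⟩ (insert ⟨k, m₂⟩ (chosen n B e
                ((Finset.univ.erase (⟨k, ⟨0, by omega⟩⟩ : Slot B)).erase
                  (⟨k, ⟨1, by omega⟩⟩ : Slot B)))) -
              marg n f ⟨k, m₁⟩ (chosen n B e
                ((Finset.univ.erase (⟨k, ⟨0, by omega⟩⟩ : Slot B)).erase
                  (⟨k, ⟨1, by omega⟩⟩ : Slot B)))) *
              jointProb n B x e := by
      intro sb sb'' hne
      rw [W_collapse n B f x k m₁ m₂ sb sb'' hne]
      exact sum_chosen_perm n B x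
        (fun T => marg n f ⟨k, m₁⟩ (insert ⟨k, m₂⟩ T) - marg n f ⟨k, m₁⟩ T)
        k ⟨0, by omega⟩ ⟨1, by omega⟩ sb'' sb hc01 (Ne.symm hne)
    calc (∑ s : Slot B, ∑ s'' ∈ Finset.univ.erase s, ∑ e : Choice n B,
            (f (chosen n B e Finset.univ) * dcoefO n ⟨k, m₂⟩ s.1 (e s)) *
              (dcoefO n ⟨k, m₁⟩ s''.1 (e s'') *
                ∏ s' ∈ (Finset.univ.erase s).erase s'', prob n x s'.1 (e s')))
        = ∑ s : Slot B, ∑ s'' ∈ Finset.univ.erase s,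
            (if s.1 = k ∧ s''.1 = k then
              ∑ e : Choice n B,
                (marg n f ⟨k, m₁⟩ (insert ⟨k, m₂⟩ (chosen n B e
                    ((Finset.univ.erase (⟨k, ⟨0, by omega⟩⟩ : Slot B)).erase
                      (⟨k, ⟨1, by omega⟩⟩ : Slot B)))) -
                  marg n f ⟨k, m₁⟩ (chosen n B e
                    ((Finset.univ.erase (⟨k, ⟨0, by omega⟩⟩ : Slot B)).erase
                      (⟨k, ⟨1, by omega⟩⟩ : Slot B)))) *
                  jointProb n B x e
            else 0) := by
          refine Finset.sum_congr rfl fun s _ => Finset.sum_congr rfl fun s'' hs'' => ?_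
          by_cases hs : s.1 = k
          · by_cases hs2 : s''.1 = k
            · rw [if_pos ⟨hs, hs2⟩]
              have hne12 := Finset.ne_of_mem_erase hs''
              obtain ⟨a, b⟩ := s
              obtain ⟨a2, b2⟩ := s''
              dsimp at hs hs2
              subst hs; subst hs2
              exact hWk b b2 fun h => hne12 (congrArg (Sigma.mk _) h.symm)
            · rw [if_neg fun hand => hs2 hand.2]
              refine Finset.sum_eq_zero fun e _ => ?_
              rw [dcoefO_of_ne n ⟨k, m₁⟩ s''.1 hs2 (e s'')]
              ring
          · rw [if_neg fun hand => hs hand.1]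
            refine Finset.sum_eq_zero fun e _ => ?_
            rw [dcoefO_of_ne n ⟨k, m₂⟩ s.1 hs (e s)]
            ring
      _ = ∑ s : Slot B,
            (if s.1 = k then (B k - 1) •
              ∑ e : Choice n B,
                (marg n f ⟨k, m₁⟩ (insert ⟨k, m₂⟩ (chosen n B e
                    ((Finset.univ.erase (⟨k, ⟨0, by omega⟩⟩ : Slot B)).erase
                      (⟨k, ⟨1, by omega⟩⟩ : Slot B)))) -
                  marg n f ⟨k, m₁⟩ (chosen n B e
                    ((Finset.univ.erase (⟨k, ⟨0, by omega⟩⟩ : Slot B)).erase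
                      (⟨k, ⟨1, by omega⟩⟩ : Slot B)))) *
                  jointProb n B x e
            else 0) := by
          refine Finset.sum_congr rfl fun s _ => ?_
          by_cases hs : s.1 = k
          · rw [if_pos hs]
            refine Eq.trans (Finset.sum_congr rfl fun s'' _ =>
              if_congr (and_iff_right hs) rfl rfl) ?_
            rw [← Finset.sum_filter, Finset.sum_const, Finset.filter_erase,
              Finset.card_erase_of_mem (Finset.mem_filter.mpr ⟨Finset.mem_univ s, hs⟩),
              card_filter_fst]
          · rw [if_neg hs]
            exact Finset.sum_eq_zero fun s'' _ => if_neg fun hand => hs hand.1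
      _ = (B k) • ((B k - 1) •
              ∑ e : Choice n B,
                (marg n f ⟨k, m₁⟩ (insert ⟨k, m₂⟩ (chosen n B e
                    ((Finset.univ.erase (⟨k, ⟨0, by omega⟩⟩ : Slot B)).erase
                      (⟨k, ⟨1, by omega⟩⟩ : Slot B)))) -
                  marg n f ⟨k, m₁⟩ (chosen n B e
                    ((Finset.univ.erase (⟨k, ⟨0, by omega⟩⟩ : Slot B)).erase
                      (⟨k, ⟨1, by omega⟩⟩ : Slot B)))) *
                  jointProb n B x e) := by
          rw [← Finset.sum_filter, Finset.sum_const, card_filter_fst]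
      _ = ((B k : ℝ) ^ 2 - (B k : ℝ)) * ∑ e : Choice n B,
            (marg n f ⟨k, m₁⟩ (insert ⟨k, m₂⟩ (chosen n B e
                ((Finset.univ.erase (⟨k, ⟨0, by omega⟩⟩ : Slot B)).erase
                  (⟨k, ⟨1, by omega⟩⟩ : Slot B)))) -
              marg n f ⟨k, m₁⟩ (chosen n B e
                ((Finset.univ.erase (⟨k, ⟨0, by omega⟩⟩ : Slot B)).erase
                  (⟨k, ⟨1, by omega⟩⟩ : Slot B)))) *
              jointProb n B x e := by
          rw [nsmul_eq_mul, nsmul_eq_mul, Nat.cast_sub (hB k), Nat.cast_one]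
          ring

end Multinoulli
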